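/- Let f : (0,1] → ℝ be continuous with f(1) ≤ 0, and let y : [0,1] → ℝ be C² with y'(x₁) = 0 at some x₁ ∈ (0,1), such that (x⁻¹(1-x²)² y')' (x) = -f(x)·x⁻¹(1-x²)² for all x ∈ (x₁,1), where f ≥ 0 on (x₁,1). If y'(1) = 0 (in the sense that x⁻¹(1-x²)² y'(x) → 0 as x → 1⁻), then f ≡ 0 on [x₁,1]. -/

import Mathlib

open Set

/-- Integration-by-parts step: the nonnegative source must vanish. -/
theorem stmt_1 (f y : ℝ → ℝ) (x₁ : ℝ) (hx₁ : x₁ ∈ Ioo (0:ℝ) 1)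
    (hfc : ContinuousOn f (Ioc (0:ℝ) 1)) (hf1 : f 1 ≤ 0)
    (hy : ContDiffOn ℝ 2 y (Icc (0:ℝ) 1))
    (hcrit : deriv y x₁ = 0)
    (hODE : ∀ x ∈ Ioo x₁ 1,
      deriv (fun t => t⁻¹ * (1 - t^2)^2 * deriv y t) x = -(f x) * x⁻¹ * (1 - x^2)^2)
    (hfnn : ∀ x ∈ Ioo x₁ 1, 0 ≤ f x)
    (hb1 : Filter.Tendsto (fun x => x⁻¹ * (1 - x^2)^2 * deriv y x)
      (nhdsWithin 1 (Iio 1)) (nhds 0)) :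
    ∀ x ∈ Icc x₁ 1, f x = 0 := by
  obtain ⟨hx₁0, hx₁1⟩ := hx₁
  set g : ℝ → ℝ := fun t => t⁻¹ * (1 - t^2)^2 * deriv y t with hg
  -- derivWithin = deriv and continuity/differentiability of deriv y on Ioo 0 1
  have hIccNhds : ∀ x ∈ Ioo (0:ℝ) 1, Icc (0:ℝ) 1 ∈ nhds x := fun x hx =>
    Icc_mem_nhds hx.1 hx.2
  have hdw : ∀ x ∈ Ioo (0:ℝ) 1, derivWithin y (Icc (0:ℝ) 1) x = deriv y x := fun x hx =>
    derivWithin_of_mem_nhds (hIccNhds x hx)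
  have hC1 : ContDiffOn ℝ 1 (derivWithin y (Icc (0:ℝ) 1)) (Icc (0:ℝ) 1) :=
    hy.derivWithin (uniqueDiffOn_Icc one_pos) (by norm_num)
  have hdiffy : ∀ x ∈ Ioo (0:ℝ) 1, DifferentiableAt ℝ (deriv y) x := by
    intro x hx
    have h1 : DifferentiableAt ℝ (derivWithin y (Icc (0:ℝ) 1)) x :=
      ((hC1.differentiableOn one_ne_zero x (Ioo_subset_Icc_self hx)).differentiableAt
        (hIccNhds x hx))
    have heq : derivWithin y (Icc (0:ℝ) 1) =ᶠ[nhds x] deriv y := by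
      filter_upwards [isOpen_Ioo.mem_nhds hx] with t ht using hdw t ht
    exact (Filter.EventuallyEq.differentiableAt_iff heq).mp h1
  have hconty : ContinuousOn (deriv y) (Ioo (0:ℝ) 1) := by
    intro x hx
    exact (hdiffy x hx).continuousAt.continuousWithinAt
  have hgdiff : ∀ x ∈ Ioo (0:ℝ) 1, DifferentiableAt ℝ g x := by
    intro x hx
    exact (((differentiableAt_inv hx.1.ne').mul (by fun_prop)).mul (hdiffy x hx))
  have hgcont : ContinuousOn g (Ico x₁ 1) := by
    intro x hx
    exact ((hgdiff x ⟨lt_of_lt_of_le hx₁0 hx.1, hx.2⟩).continuousAt).continuousWithinAt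
  -- g is antitone on Ico x₁ 1
  have hanti : AntitoneOn g (Ico x₁ 1) := by
    apply antitoneOn_of_deriv_nonpos (convex_Ico x₁ 1) hgcont
    · intro x hx
      rw [interior_Ico] at hx
      exact (hgdiff x ⟨hx₁0.trans hx.1, hx.2⟩).differentiableWithinAt
    · intro x hx
      rw [interior_Ico] at hx
      rw [hODE x hx]
      have h1 : (0:ℝ) < x⁻¹ := inv_pos.mpr (hx₁0.trans hx.1)
      have h2 : (0:ℝ) ≤ (1 - x^2)^2 := sq_nonneg _
      nlinarith [mul_nonneg (mul_nonneg (hfnn x hx) h1.le) h2]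
  have hgx₁ : g x₁ = 0 := by simp [hg, hcrit]
  -- g = 0 on Ico x₁ 1
  have hg0 : ∀ x ∈ Ico x₁ 1, g x = 0 := by
    intro x hx
    have hle : g x ≤ 0 := hgx₁ ▸ hanti (left_mem_Ico.mpr hx₁1) hx hx.1
    have hge : 0 ≤ g x := by
      refine le_of_tendsto hb1 ?_
      have hmem : Ioo x 1 ∈ nhdsWithin (1:ℝ) (Iio 1) :=
        Ioo_mem_nhdsLT_of_mem ⟨hx.2, le_rfl⟩
      filter_upwards [hmem] with t ht
      exact hanti hx ⟨hx.1.trans ht.1.le, ht.2⟩ ht.1.le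
    linarith
  -- f = 0 on Ioo x₁ 1
  have hf0 : ∀ x ∈ Ioo x₁ 1, f x = 0 := by
    intro x hx
    have hderiv0 : deriv g x = 0 := by
      have heq : g =ᶠ[nhds x] fun _ => (0:ℝ) := by
        filter_upwards [isOpen_Ioo.mem_nhds hx] with t ht using hg0 t ⟨ht.1.le, ht.2⟩
      rw [heq.deriv_eq, deriv_const]
    rw [hODE x hx] at hderiv0
    have h1 : (0:ℝ) < x⁻¹ := inv_pos.mpr (hx₁0.trans hx.1)
    have h2 : (0:ℝ) < (1 - x^2)^2 := by
      have h3 : (0:ℝ) < 1 - x^2 := by nlinarith [hx.2, hx₁0.trans hx.1]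
      positivity
    have hne : -(f x) = 0 := by
      by_contra h
      exact (mul_ne_zero (mul_ne_zero h h1.ne') h2.ne') hderiv0
    linarith
  -- endpoints via continuity
  have hIooSub : Ioo x₁ 1 ⊆ Ioc (0:ℝ) 1 := fun t ht => ⟨hx₁0.trans ht.1, ht.2.le⟩
  have hfx₁ : f x₁ = 0 := by
    have hcw : Filter.Tendsto f (nhdsWithin x₁ (Ioo x₁ 1)) (nhds (f x₁)) :=
      ((hfc x₁ ⟨hx₁0, hx₁1.le⟩).mono hIooSub).tendsto
    have hzero : Filter.Tendsto f (nhdsWithin x₁ (Ioo x₁ 1)) (nhds 0) := by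
      refine Filter.Tendsto.congr' ?_ tendsto_const_nhds
      filter_upwards [self_mem_nhdsWithin] with t ht using (hf0 t ht).symm
    have : (nhdsWithin x₁ (Ioo x₁ 1)).NeBot :=
      (mem_closure_iff_nhdsWithin_neBot.mp
        ((closure_Ioo hx₁1.ne).symm ▸ (left_mem_Icc.mpr hx₁1.le)))
    exact tendsto_nhds_unique hcw hzero
  have hfone : f 1 = 0 := by
    have hcw : Filter.Tendsto f (nhdsWithin 1 (Ioo x₁ 1)) (nhds (f 1)) :=
      ((hfc 1 ⟨one_pos, le_rfl⟩).mono hIooSub).tendsto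
    have hzero : Filter.Tendsto f (nhdsWithin 1 (Ioo x₁ 1)) (nhds 0) := by
      refine Filter.Tendsto.congr' ?_ tendsto_const_nhds
      filter_upwards [self_mem_nhdsWithin] with t ht using (hf0 t ht).symm
    have : (nhdsWithin 1 (Ioo x₁ 1)).NeBot :=
      (mem_closure_iff_nhdsWithin_neBot.mp
        ((closure_Ioo hx₁1.ne).symm ▸ (right_mem_Icc.mpr hx₁1.le)))
    exact tendsto_nhds_unique hcw hzero
  intro x hx
  rcases eq_or_lt_of_le hx.1 with h1 | h1
  · exact h1 ▸ hfx₁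
  rcases eq_or_lt_of_le hx.2 with h2 | h2
  · exact h2 ▸ hfone
  exact hf0 x ⟨h1, h2⟩
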